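/- Let X be a random vector in ℝ^d that decomposes as X = W + Z u*, where u* is a unit vector, W ⟂⟂ Z, ⟨W, u*⟩ = 0, E[W] = 0, E[Z] = 0, and X has nonsingular covariance Σ. Let σ : ℝ → [0,1] be differentiable with σ' > 0, and let φ : ℝ → [0,1] be measurable. Define L(θ) = E[ℓ_{σ,θ}(1|X) φ(⟨X,θ*⟩) + ℓ_{σ,θ}(-1|X)(1 - φ(⟨X,θ*⟩))] where ℓ_{σ,θ}(y|x) = -∫_0^{y⟨θ,x⟩} σ(-v) dv and θ* = t* u* with t* > 0. Then for θ = t u*, the gradient satisfies ∇L(t u*) = h(t) u* where h(t) = E[σ(tZ) Z (1 - φ(t* Z))] - E[σ(-tZ) Z φ(t* Z)]. -/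

import Mathlib

open MeasureTheory RealInnerProductSpace

/-- The link-based loss `ℓ_{σ,θ}(y|x) = -∫_0^{y⟨θ,x⟩} σ(-v) dv`, as a function of the
margin `s = y⟨θ,x⟩`. -/
noncomputable def linkLoss (σ : ℝ → ℝ) (s : ℝ) : ℝ := -(∫ v in (0 : ℝ)..s, σ (-v))

lemma linkLoss_hasDerivAt {σ : ℝ → ℝ} (hσ : Continuous σ) (s : ℝ) :
    HasDerivAt (linkLoss σ) (-(σ (-s))) s := by
  have h := ((hσ.comp continuous_neg).integral_hasStrictDerivAt 0 s).hasDerivAt.neg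
  exact h

lemma linkLoss_abs_le {σ : ℝ → ℝ} (hσ01 : ∀ s, σ s ∈ Set.Icc (0 : ℝ) 1) (s : ℝ) :
    |linkLoss σ s| ≤ |s| := by
  have hb : ∀ v ∈ Set.uIoc (0 : ℝ) s, ‖σ (-v)‖ ≤ 1 := by
    intro v _
    rw [Real.norm_eq_abs, abs_le]
    exact ⟨by linarith [(hσ01 (-v)).1], (hσ01 (-v)).2⟩
  have := intervalIntegral.norm_integral_le_of_norm_le_const (C := 1) hb
  simpa [linkLoss, abs_neg] using this

set_option maxHeartbeats 2000000 in
set_option synthInstance.maxHeartbeats 400000 in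
/-- Under the independent decomposition `X = W + Z u*`, the gradient of the population
link-based loss at `θ = t u*` is radial: `∇L(t u*) = h(t) u*` with
`h(t) = E[σ(tZ) Z (1 - φ(t* Z))] - E[σ(-tZ) Z φ(t* Z)]`. -/
theorem population_gradient_radial {Ω : Type*} [MeasurableSpace Ω]
    (μ : Measure Ω) [IsProbabilityMeasure μ] {d : ℕ}
    (X W : Ω → EuclideanSpace ℝ (Fin d)) (Z : Ω → ℝ)
    (u : EuclideanSpace ℝ (Fin d)) (hu : ‖u‖ = 1)
    (hdecomp : ∀ ω, X ω = W ω + Z ω • u)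
    (hWmeas : Measurable W) (hZmeas : Measurable Z)
    (hindep : ProbabilityTheory.IndepFun W Z μ)
    (hWperp : ∀ ω, ⟪W ω, u⟫ = 0)
    (hEW : ∫ ω, W ω ∂μ = 0) (hEZ : ∫ ω, Z ω ∂μ = 0)
    (hXint : Integrable (fun ω => ‖X ω‖) μ)
    (σ σ' : ℝ → ℝ) (hσ01 : ∀ s, σ s ∈ Set.Icc (0 : ℝ) 1)
    (hσderiv : ∀ s, HasDerivAt σ (σ' s) s) (hσ'pos : ∀ s, 0 < σ' s)
    (φ : ℝ → ℝ) (hφ : Measurable φ) (hφ01 : ∀ s, φ s ∈ Set.Icc (0 : ℝ) 1)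
    (ts : ℝ) (hts : 0 < ts)
    (L : EuclideanSpace ℝ (Fin d) → ℝ)
    (hL : ∀ θ, L θ = ∫ ω,
      (linkLoss σ (1 * ⟪θ, X ω⟫) * φ (⟪X ω, ts • u⟫) +
        linkLoss σ ((-1) * ⟪θ, X ω⟫) * (1 - φ (⟪X ω, ts • u⟫))) ∂μ)
    (h : ℝ → ℝ)
    (hh : ∀ s, h s = (∫ ω, σ (s * Z ω) * Z ω * (1 - φ (ts * Z ω)) ∂μ) -
      ∫ ω, σ (-(s * Z ω)) * Z ω * φ (ts * Z ω) ∂μ)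
    (t : ℝ) :
    HasGradientAt L (h t • u) (t • u) := by
  classical
  have hσcont : Continuous σ := continuous_iff_continuousAt.2 fun s => (hσderiv s).continuousAt
  have hlcont : Continuous (linkLoss σ) :=
    continuous_iff_continuousAt.2 fun s => (linkLoss_hasDerivAt hσcont s).continuousAt
  -- basic facts about the decomposition
  have huu : ⟪u, u⟫ = (1 : ℝ) := by
    rw [real_inner_self_eq_norm_sq, hu]; norm_num
  have hXu : ∀ ω, ⟪X ω, u⟫ = Z ω := by
    intro ω
    rw [hdecomp ω, inner_add_left, hWperp ω, real_inner_smul_left, huu]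
    ring
  have hXmeas : Measurable X := by
    have hX : X = fun ω => W ω + Z ω • u := funext hdecomp
    rw [hX]
    exact hWmeas.add (hZmeas.smul_const u)
  have hZabs : ∀ ω, |Z ω| ≤ ‖X ω‖ := by
    intro ω
    calc |Z ω| = |⟪X ω, u⟫| := by rw [hXu]
      _ ≤ ‖X ω‖ * ‖u‖ := abs_real_inner_le_norm _ _
      _ = ‖X ω‖ := by rw [hu, mul_one]
  have hXint' : Integrable X μ := (integrable_norm_iff hXmeas.aestronglyMeasurable).1 hXint
  have hZint : Integrable Z μ :=
    Integrable.mono' hXint hZmeas.aestronglyMeasurable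
      (Filter.Eventually.of_forall fun ω => by simpa using hZabs ω)
  have hWint : Integrable W μ := by
    have hW : W = fun ω => X ω - Z ω • u := by
      funext ω; rw [hdecomp ω]; abel
    rw [hW]
    exact hXint'.sub (hZint.smul_const u)
  have hXtsu : ∀ ω, ⟪X ω, ts • u⟫ = ts * Z ω := fun ω => by
    rw [real_inner_smul_right, hXu]
  have htuX : ∀ ω, ⟪t • u, X ω⟫ = t * Z ω := fun ω => by
    rw [real_inner_smul_left, real_inner_comm, hXu]
  -- the coefficient function and the candidate derivative
  set c : EuclideanSpace ℝ (Fin d) → Ω → ℝ := fun θ ω =>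
    σ ⟪θ, X ω⟫ * (1 - φ (ts * Z ω)) - σ (-⟪θ, X ω⟫) * φ (ts * Z ω) with hc
  set F' : EuclideanSpace ℝ (Fin d) → Ω → EuclideanSpace ℝ (Fin d) →L[ℝ] ℝ :=
    fun θ ω => c θ ω • innerSL ℝ (X ω) with hF'
  have hcbound : ∀ θ ω, |c θ ω| ≤ 1 := by
    intro θ ω
    have h1 := hσ01 ⟪θ, X ω⟫
    have h2 := hσ01 (-⟪θ, X ω⟫)
    have h3 := hφ01 (ts * Z ω)
    simp only [Set.mem_Icc] at h1 h2 h3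
    simp only [hc]
    rw [abs_le]
    constructor <;> nlinarith [h1.1, h1.2, h2.1, h2.2, h3.1, h3.2]
  -- pointwise differentiability in θ
  have hdiff : ∀ ω θ, HasFDerivAt (fun θ : EuclideanSpace ℝ (Fin d) =>
      linkLoss σ (1 * ⟪θ, X ω⟫) * φ (⟪X ω, ts • u⟫) +
        linkLoss σ ((-1) * ⟪θ, X ω⟫) * (1 - φ (⟪X ω, ts • u⟫))) (F' θ ω) θ := by
    intro ω θ
    have hinner : HasFDerivAt (fun θ : EuclideanSpace ℝ (Fin d) => ⟪θ, X ω⟫)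
        (innerSL ℝ (X ω)) θ := by
      have heq : (fun θ : EuclideanSpace ℝ (Fin d) => ⟪θ, X ω⟫)
          = fun θ => innerSL ℝ (X ω) θ := funext fun θ => real_inner_comm _ _
      rw [heq]
      exact (innerSL ℝ (X ω)).hasFDerivAt
    have d1 : HasFDerivAt (fun θ : EuclideanSpace ℝ (Fin d) => linkLoss σ ⟪θ, X ω⟫)
        ((-(σ (-⟪θ, X ω⟫))) • innerSL ℝ (X ω)) θ :=
      (linkLoss_hasDerivAt hσcont _).comp_hasFDerivAt θ hinner
    have d2 : HasFDerivAt (fun θ : EuclideanSpace ℝ (Fin d) => linkLoss σ (-⟪θ, X ω⟫))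
        ((σ ⟪θ, X ω⟫) • innerSL ℝ (X ω)) θ := by
      have hcomp := (linkLoss_hasDerivAt hσcont (-⟪θ, X ω⟫)).comp_hasFDerivAt θ hinner.neg
      simp only [smul_neg, neg_smul, neg_neg] at hcomp
      exact hcomp
    have hsum := (d1.mul_const (φ (⟪X ω, ts • u⟫))).add
      (d2.mul_const (1 - φ (⟪X ω, ts • u⟫)))
    have heq2 : (fun θ : EuclideanSpace ℝ (Fin d) =>
        linkLoss σ (1 * ⟪θ, X ω⟫) * φ (⟪X ω, ts • u⟫) +
        linkLoss σ ((-1) * ⟪θ, X ω⟫) * (1 - φ (⟪X ω, ts • u⟫)))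
        = fun θ : EuclideanSpace ℝ (Fin d) =>
          linkLoss σ ⟪θ, X ω⟫ * φ (⟪X ω, ts • u⟫) +
          linkLoss σ (-⟪θ, X ω⟫) * (1 - φ (⟪X ω, ts • u⟫)) := by
      funext θ; rw [one_mul, neg_one_mul]
    rw [heq2]
    refine hsum.congr_fderiv ?_
    ext v
    simp only [hF', hc, ContinuousLinearMap.smul_apply, ContinuousLinearMap.add_apply,
      innerSL_apply_apply, smul_eq_mul, hXtsu ω]
    ring
  -- measurability of the integrand
  have hmθ : ∀ θ : EuclideanSpace ℝ (Fin d), Measurable fun ω => ⟪θ, X ω⟫ := fun θ =>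
    (innerSL ℝ θ).continuous.measurable.comp hXmeas
  have hφmeas : Measurable fun ω => φ (⟪X ω, ts • u⟫) := by
    simp only [hXtsu]
    exact hφ.comp (hZmeas.const_mul ts)
  have hFmeas : ∀ θ : EuclideanSpace ℝ (Fin d), AEStronglyMeasurable (fun ω =>
      linkLoss σ (1 * ⟪θ, X ω⟫) * φ (⟪X ω, ts • u⟫) +
      linkLoss σ ((-1) * ⟪θ, X ω⟫) * (1 - φ (⟪X ω, ts • u⟫))) μ := by
    intro θ
    refine Measurable.aestronglyMeasurable ?_
    exact ((hlcont.measurable.comp ((hmθ θ).const_mul 1)).mul hφmeas).add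
      ((hlcont.measurable.comp ((hmθ θ).const_mul (-1))).mul (measurable_const.sub hφmeas))
  have hcmeas : ∀ θ, Measurable (c θ) := by
    intro θ
    have hφm : Measurable fun ω => φ (ts * Z ω) := hφ.comp (hZmeas.const_mul ts)
    exact ((hσcont.measurable.comp (hmθ θ)).mul (measurable_const.sub hφm)).sub
      ((hσcont.measurable.comp (hmθ θ).neg).mul hφm)
  have hF'meas : ∀ θ, AEStronglyMeasurable (F' θ) μ := by
    intro θ
    refine AEStronglyMeasurable.smul (hcmeas θ).aestronglyMeasurable ?_
    exact (innerSL ℝ (E := EuclideanSpace ℝ (Fin d))).continuous.comp_aestronglyMeasurable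
      hXmeas.aestronglyMeasurable
  -- integrability of the integrand at the base point
  have hFint : Integrable (fun ω =>
      linkLoss σ (1 * ⟪t • u, X ω⟫) * φ (⟪X ω, ts • u⟫) +
      linkLoss σ ((-1) * ⟪t • u, X ω⟫) * (1 - φ (⟪X ω, ts • u⟫))) μ := by
    refine Integrable.mono' (hXint.const_mul (2 * |t|)) (hFmeas _)
      (Filter.Eventually.of_forall fun ω => ?_)
    have hb1 : |linkLoss σ (1 * ⟪t • u, X ω⟫)| ≤ |t| * ‖X ω‖ := by
      calc |linkLoss σ (1 * ⟪t • u, X ω⟫)| ≤ |1 * ⟪t • u, X ω⟫| := linkLoss_abs_le hσ01 _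
        _ = |t| * |Z ω| := by rw [one_mul, htuX ω, abs_mul]
        _ ≤ |t| * ‖X ω‖ := mul_le_mul_of_nonneg_left (hZabs ω) (abs_nonneg t)
    have hb2 : |linkLoss σ ((-1) * ⟪t • u, X ω⟫)| ≤ |t| * ‖X ω‖ := by
      calc |linkLoss σ ((-1) * ⟪t • u, X ω⟫)| ≤ |(-1) * ⟪t • u, X ω⟫| := linkLoss_abs_le hσ01 _
        _ = |t| * |Z ω| := by rw [neg_one_mul, abs_neg, htuX ω, abs_mul]
        _ ≤ |t| * ‖X ω‖ := mul_le_mul_of_nonneg_left (hZabs ω) (abs_nonneg t)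
    have hp := hφ01 (⟪X ω, ts • u⟫)
    simp only [Set.mem_Icc] at hp
    rw [Real.norm_eq_abs]
    have := abs_add_le (linkLoss σ (1 * ⟪t • u, X ω⟫) * φ (⟪X ω, ts • u⟫))
      (linkLoss σ ((-1) * ⟪t • u, X ω⟫) * (1 - φ (⟪X ω, ts • u⟫)))
    have hm1 : |linkLoss σ (1 * ⟪t • u, X ω⟫) * φ (⟪X ω, ts • u⟫)| ≤ |t| * ‖X ω‖ := by
      rw [abs_mul]
      calc |linkLoss σ (1 * ⟪t • u, X ω⟫)| * |φ (⟪X ω, ts • u⟫)|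
          ≤ (|t| * ‖X ω‖) * 1 := by
            apply mul_le_mul hb1 _ (abs_nonneg _) (by positivity)
            rw [abs_le]; exact ⟨by linarith, hp.2⟩
        _ = |t| * ‖X ω‖ := mul_one _
    have hm2 : |linkLoss σ ((-1) * ⟪t • u, X ω⟫) * (1 - φ (⟪X ω, ts • u⟫))| ≤ |t| * ‖X ω‖ := by
      rw [abs_mul]
      calc |linkLoss σ ((-1) * ⟪t • u, X ω⟫)| * |1 - φ (⟪X ω, ts • u⟫)|
          ≤ (|t| * ‖X ω‖) * 1 := by
            apply mul_le_mul hb2 _ (abs_nonneg _) (by positivity)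
            rw [abs_le]; constructor <;> linarith
        _ = |t| * ‖X ω‖ := mul_one _
    calc |linkLoss σ (1 * ⟪t • u, X ω⟫) * φ (⟪X ω, ts • u⟫) +
        linkLoss σ ((-1) * ⟪t • u, X ω⟫) * (1 - φ (⟪X ω, ts • u⟫))| ≤
        |t| * ‖X ω‖ + |t| * ‖X ω‖ := le_trans this (by linarith)
      _ = 2 * |t| * ‖X ω‖ := by ring
  -- bound on the derivative
  have hF'bound : ∀ θ ω, ‖F' θ ω‖ ≤ ‖X ω‖ := by
    intro θ ω
    rw [hF']
    calc ‖c θ ω • innerSL ℝ (X ω)‖ = |c θ ω| * ‖innerSL ℝ (X ω)‖ := by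
          rw [norm_smul (c θ ω) (innerSL ℝ (X ω)), Real.norm_eq_abs]
      _ ≤ 1 * ‖X ω‖ := by
          rw [innerSL_apply_norm]
          exact mul_le_mul_of_nonneg_right (hcbound θ ω) (norm_nonneg _)
      _ = ‖X ω‖ := one_mul _
  -- differentiation under the integral sign
  have main := hasFDerivAt_integral_of_dominated_of_fderiv_le
    (F := fun (θ : EuclideanSpace ℝ (Fin d)) ω =>
      linkLoss σ (1 * ⟪θ, X ω⟫) * φ (⟪X ω, ts • u⟫) +
      linkLoss σ ((-1) * ⟪θ, X ω⟫) * (1 - φ (⟪X ω, ts • u⟫)))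
    (F' := F') (x₀ := t • u) (bound := fun ω => ‖X ω‖) (Metric.ball_mem_nhds _ one_pos)
    (Filter.Eventually.of_forall fun θ => hFmeas θ) hFint (hF'meas _)
    (Filter.Eventually.of_forall fun ω θ _ => hF'bound θ ω) hXint
    (Filter.Eventually.of_forall fun ω θ _ => hdiff ω θ)
  -- integrability facts for the identification of the derivative
  have hF'int : Integrable (F' (t • u)) μ :=
    Integrable.mono' hXint (hF'meas _) (Filter.Eventually.of_forall fun ω => hF'bound _ ω)
  set g : ℝ → ℝ := fun z => σ (t * z) * (1 - φ (ts * z)) - σ (-(t * z)) * φ (ts * z) with hg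
  have hgc : ∀ ω, c (t • u) ω = g (Z ω) := by
    intro ω
    rw [hc, hg]
    simp only [htuX ω]
  have hgmeas : Measurable g := by
    have m1 : Measurable fun z : ℝ => σ (t * z) := hσcont.measurable.comp (measurable_id.const_mul t)
    have m2 : Measurable fun z : ℝ => φ (ts * z) := hφ.comp (measurable_id.const_mul ts)
    have m3 : Measurable fun z : ℝ => σ (-(t * z)) :=
      hσcont.measurable.comp (measurable_id.const_mul t).neg
    exact (m1.mul (measurable_const.sub m2)).sub (m3.mul m2)
  have hgbound : ∀ z, |g z| ≤ 1 := by
    intro z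
    have h1 := hσ01 (t * z)
    have h2 := hσ01 (-(t * z))
    have h3 := hφ01 (ts * z)
    simp only [Set.mem_Icc] at h1 h2 h3
    simp only [hg]
    rw [abs_le]
    constructor <;> nlinarith [h1.1, h1.2, h2.1, h2.2, h3.1, h3.2]
  have hI1 : Integrable (fun ω => σ (t * Z ω) * Z ω * (1 - φ (ts * Z ω))) μ := by
    refine Integrable.mono' hXint ?_ (Filter.Eventually.of_forall fun ω => ?_)
    · exact (((hσcont.measurable.comp (hZmeas.const_mul t)).mul hZmeas).mul
        (measurable_const.sub (hφ.comp (hZmeas.const_mul ts)))).aestronglyMeasurable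
    · have h1 := hσ01 (t * Z ω)
      have h3 := hφ01 (ts * Z ω)
      simp only [Set.mem_Icc] at h1 h3
      rw [Real.norm_eq_abs, abs_mul, abs_mul]
      calc |σ (t * Z ω)| * |Z ω| * |1 - φ (ts * Z ω)| ≤ 1 * ‖X ω‖ * 1 := by
            apply mul_le_mul _ _ (abs_nonneg _) (by positivity)
            · apply mul_le_mul _ (hZabs ω) (abs_nonneg _) zero_le_one
              rw [abs_le]; exact ⟨by linarith, h1.2⟩
            · rw [abs_le]; constructor <;> linarith
        _ = ‖X ω‖ := by ring
  have hI2 : Integrable (fun ω => σ (-(t * Z ω)) * Z ω * φ (ts * Z ω)) μ := by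
    refine Integrable.mono' hXint ?_ (Filter.Eventually.of_forall fun ω => ?_)
    · exact (((hσcont.measurable.comp (hZmeas.const_mul t).neg).mul hZmeas).mul
        (hφ.comp (hZmeas.const_mul ts))).aestronglyMeasurable
    · have h2 := hσ01 (-(t * Z ω))
      have h3 := hφ01 (ts * Z ω)
      simp only [Set.mem_Icc] at h2 h3
      rw [Real.norm_eq_abs, abs_mul, abs_mul]
      calc |σ (-(t * Z ω))| * |Z ω| * |φ (ts * Z ω)| ≤ 1 * ‖X ω‖ * 1 := by
            apply mul_le_mul _ _ (abs_nonneg _) (by positivity)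
            · apply mul_le_mul _ (hZabs ω) (abs_nonneg _) zero_le_one
              rw [abs_le]; exact ⟨by linarith, h2.2⟩
            · rw [abs_le]; exact ⟨by linarith, h3.2⟩
        _ = ‖X ω‖ := by ring
  -- identification of the derivative
  have hkey : (∫ ω, F' (t • u) ω ∂μ)
      = (InnerProductSpace.toDual ℝ (EuclideanSpace ℝ (Fin d))) (h t • u) := by
    ext v
    rw [ContinuousLinearMap.integral_apply hF'int]
    have hptw : ∀ ω, F' (t • u) ω v
        = g (Z ω) * ⟪v, W ω⟫ + (g (Z ω) * Z ω) * ⟪v, u⟫ := by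
      intro ω
      rw [hF']
      simp only [ContinuousLinearMap.smul_apply, innerSL_apply_apply, smul_eq_mul, hgc ω]
      rw [real_inner_comm v (X ω), hdecomp ω, inner_add_right, real_inner_smul_right]
      ring
    rw [integral_congr_ae (Filter.Eventually.of_forall hptw)]
    have hgZint : Integrable (fun ω => g (Z ω)) μ := by
      refine Integrable.mono' (integrable_const 1) ((hgmeas.comp hZmeas).aestronglyMeasurable)
        (Filter.Eventually.of_forall fun ω => ?_)
      simpa [Real.norm_eq_abs] using hgbound (Z ω)
    have hWvint : Integrable (fun ω => ⟪v, W ω⟫) μ := by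
      have := (innerSL ℝ v).integrable_comp hWint
      simpa using this
    have hgWint : Integrable (fun ω => g (Z ω) * ⟪v, W ω⟫) μ := by
      refine Integrable.mono' (hWvint.abs) ?_ (Filter.Eventually.of_forall fun ω => ?_)
      · exact ((hgmeas.comp hZmeas).mul
          ((innerSL ℝ v).continuous.measurable.comp hWmeas)).aestronglyMeasurable
      · rw [Real.norm_eq_abs, abs_mul]
        calc |g (Z ω)| * |⟪v, W ω⟫| ≤ 1 * |⟪v, W ω⟫| :=
              mul_le_mul_of_nonneg_right (hgbound _) (abs_nonneg _)
          _ = |⟪v, W ω⟫| := one_mul _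
    have hgZZint : Integrable (fun ω => g (Z ω) * Z ω) μ := by
      have heq : (fun ω => g (Z ω) * Z ω) = fun ω =>
          σ (t * Z ω) * Z ω * (1 - φ (ts * Z ω)) - σ (-(t * Z ω)) * Z ω * φ (ts * Z ω) := by
        funext ω; rw [hg]; ring
      rw [heq]
      exact hI1.sub hI2
    rw [integral_add hgWint (hgZZint.mul_const _)]
    -- the W-term vanishes by independence
    have hzeroW : (∫ ω, g (Z ω) * ⟪v, W ω⟫ ∂μ) = 0 := by
      have hindep' : ProbabilityTheory.IndepFun (fun ω => g (Z ω)) (fun ω => ⟪v, W ω⟫) μ :=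
        hindep.symm.comp hgmeas (innerSL ℝ v).continuous.measurable
      have := hindep'.integral_mul_eq_mul_integral ((hgmeas.comp hZmeas).aestronglyMeasurable)
        (((innerSL ℝ v).continuous.measurable.comp hWmeas).aestronglyMeasurable)
      have hWv0 : (∫ ω, ⟪v, W ω⟫ ∂μ) = 0 := by
        rw [integral_inner hWint v, hEW, inner_zero_right]
      calc (∫ ω, g (Z ω) * ⟪v, W ω⟫ ∂μ)
          = (∫ ω, g (Z ω) ∂μ) * ∫ ω, ⟪v, W ω⟫ ∂μ := this
        _ = 0 := by rw [hWv0, mul_zero]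
    -- the Z-term gives h t
    have hgZh : (∫ ω, g (Z ω) * Z ω ∂μ) = h t := by
      have heq : (fun ω => g (Z ω) * Z ω) = fun ω =>
          σ (t * Z ω) * Z ω * (1 - φ (ts * Z ω)) - σ (-(t * Z ω)) * Z ω * φ (ts * Z ω) := by
        funext ω; rw [hg]; ring
      rw [heq, integral_sub hI1 hI2, hh t]
    rw [hzeroW, integral_mul_const, hgZh, zero_add, InnerProductSpace.toDual_apply_apply,
      real_inner_smul_left, real_inner_comm u v]
  -- conclude
  have hLdef : L = fun θ => ∫ ω,
      (linkLoss σ (1 * ⟪θ, X ω⟫) * φ (⟪X ω, ts • u⟫) +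
        linkLoss σ ((-1) * ⟪θ, X ω⟫) * (1 - φ (⟪X ω, ts • u⟫))) ∂μ := funext hL
  rw [hasGradientAt_iff_hasFDerivAt, hLdef]
  exact hkey ▸ main
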